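/- arXiv:1012.4019 — 2 statements merged into one kernel-verified Lean document; each statement's English description precedes it below -/
import Mathlib

section
/- Let N > N₀ for a sufficiently large constant N₀, let k = ⌊√((1/2)·log₂N·log₂log₂N)⌋ and m = ⌈(log₂(N/2))/(k - log₂(2k))⌉, and set ρ = (N/2)^{1/m} and B_i = ⌊N/ρ^i⌋ for 0 ≤ i ≤ m. Then B₀ = N, B_m = 2, and for every i ∈ {1, ..., m}, 4k ≤ B_{i-1}/B_i ≤ 2^k/k. -/
open Finset Real

lemma aux_logb_le {x : ℝ} (hx : 1 ≤ x) : Real.logb 2 x ≤ 3 * Real.sqrt x := by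
  have hs : (1:ℝ) ≤ Real.sqrt x := by
    rw [show (1:ℝ) = Real.sqrt 1 by simp]
    exact Real.sqrt_le_sqrt hx
  have h1 : Real.log (Real.sqrt x) ≤ Real.sqrt x - 1 := Real.log_le_sub_one_of_pos (by linarith)
  have h2 : Real.log x = 2 * Real.log (Real.sqrt x) := by
    rw [Real.log_sqrt (by linarith)]; ring
  have hl2 : (2/3 : ℝ) ≤ Real.log 2 := by
    have := Real.log_two_gt_d9; linarith
  rw [Real.logb, div_le_iff₀ (by linarith)]
  nlinarith

lemma aux_logb_pow (n : ℕ) : Real.logb 2 ((2:ℝ)^n) = n := by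
  rw [← Real.rpow_natCast, Real.logb_rpow (by norm_num) (by norm_num)]

set_option maxHeartbeats 2000000 in
/-- Lemma on the sieve sizes for `dcomb`: for all sufficiently large `N`, with
`k = ⌊√(½·log₂N·log₂log₂N)⌋`, `m = ⌈log₂(N/2)/(k - log₂(2k))⌉`,
`ρ = (N/2)^{1/m}` and `B_i = ⌊N/ρ^i⌋`, one has `B₀ = N`, `B_m = 2`, and
`4k ≤ B_{i-1}/B_i ≤ 2^k/k` for all `1 ≤ i ≤ m`. -/
theorem stmt_7 :
    ∃ N₀ : ℕ, ∀ N : ℕ, N₀ < N →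
      let k : ℕ := ⌊Real.sqrt ((1 / 2) * Real.logb 2 N * Real.logb 2 (Real.logb 2 N))⌋₊
      let m : ℕ := ⌈Real.logb 2 ((N : ℝ) / 2) / ((k : ℝ) - Real.logb 2 (2 * k))⌉₊
      let ρ : ℝ := ((N : ℝ) / 2) ^ ((1 : ℝ) / m)
      let B : ℕ → ℕ := fun i => ⌊(N : ℝ) / ρ ^ i⌋₊
      B 0 = N ∧ B m = 2 ∧
        ∀ i ∈ Finset.Icc 1 m,
          4 * (k : ℝ) ≤ (B (i - 1) : ℝ) / (B i : ℝ) ∧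
          (B (i - 1) : ℝ) / (B i : ℝ) ≤ 2 ^ k / (k : ℝ) := by
  refine ⟨2^1000000, fun N hN => ?_⟩
  intro k m ρ B
  have hkd : k = ⌊Real.sqrt ((1 / 2) * Real.logb 2 N * Real.logb 2 (Real.logb 2 N))⌋₊ := rfl
  have hmd : m = ⌈Real.logb 2 ((N : ℝ) / 2) / ((k : ℝ) - Real.logb 2 (2 * k))⌉₊ := rfl
  have hρd : ρ = ((N : ℝ) / 2) ^ ((1 : ℝ) / m) := rfl
  have hBd : ∀ i, B i = ⌊(N : ℝ) / ρ ^ i⌋₊ := fun _ => rfl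
  clear_value k m ρ B
  -- basic facts about N ; get rid of 2^1000000 quickly
  have hN2 : (2:ℝ)^(1000000:ℕ) < (N:ℝ) := by exact_mod_cast hN
  have hpow2 : (2:ℝ) ≤ (2:ℝ)^(1000000:ℕ) := by
    calc (2:ℝ) = 2^(1:ℕ) := (pow_one 2).symm
    _ ≤ 2^(1000000:ℕ) := pow_le_pow_right₀ one_le_two (by norm_num)
  have hN1 : (2:ℝ) < (N:ℝ) := lt_of_le_of_lt hpow2 hN2
  have hNpos : (0:ℝ) < N := by positivity
  set M := Real.logb 2 (N:ℝ) with hMdef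
  clear_value M
  have hM : (1000000:ℝ) < M := by
    have h0 : Real.logb 2 ((2:ℝ)^(1000000:ℕ)) = 1000000 := by
      rw [aux_logb_pow]; norm_num
    calc (1000000:ℝ) = Real.logb 2 ((2:ℝ)^(1000000:ℕ)) := h0.symm
    _ < M := by
        rw [hMdef]
        exact Real.logb_lt_logb one_lt_two
          (by positivity : (0:ℝ) < (2:ℝ)^(1000000:ℕ)) hN2
  clear hN hN2 hpow2
  have hlM2 : (2:ℝ) ≤ Real.logb 2 M := by
    have h4 : Real.logb 2 ((2:ℝ)^(2:ℕ)) = 2 := by rw [aux_logb_pow]; norm_num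
    calc (2:ℝ) = Real.logb 2 ((2:ℝ)^(2:ℕ)) := h4.symm
    _ ≤ Real.logb 2 M :=
      (Real.logb_le_logb one_lt_two (by norm_num) (by linarith)).mpr (by norm_num; linarith)
  have hlMub : Real.logb 2 M ≤ 3 * Real.sqrt M := aux_logb_le (by linarith)
  have hsM : (1000:ℝ) ≤ Real.sqrt M := by
    rw [show (1000:ℝ) = Real.sqrt (1000^2) by
      rw [Real.sqrt_sq (by norm_num : (0:ℝ) ≤ 1000)]]
    exact Real.sqrt_le_sqrt (by nlinarith)
  have hsM0 : (0:ℝ) ≤ Real.sqrt M := Real.sqrt_nonneg _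
  have hsMsq : Real.sqrt M * Real.sqrt M = M := Real.mul_self_sqrt (by linarith)
  set S := 1/2 * M * Real.logb 2 M with hSdef
  clear_value S
  have hS_lb : M ≤ S := by rw [hSdef]; nlinarith
  have hsS_lb : (1000:ℝ) ≤ Real.sqrt S := by
    rw [show (1000:ℝ) = Real.sqrt (1000^2) by
      rw [Real.sqrt_sq (by norm_num : (0:ℝ) ≤ 1000)]]
    exact Real.sqrt_le_sqrt (by nlinarith)
  have hsS_ub : Real.sqrt S ≤ M - 1 := by
    have h1 : S ≤ 3/2 * (Real.sqrt M * Real.sqrt M) * Real.sqrt M := by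
      have ha : M/2 * Real.logb 2 M ≤ M/2 * (3 * Real.sqrt M) :=
        mul_le_mul_of_nonneg_left hlMub (by linarith)
      have hb : Real.sqrt M * Real.sqrt M * Real.sqrt M = M * Real.sqrt M := by
        rw [hsMsq]
      rw [hSdef]; nlinarith
    have h2 : 3/2 * (Real.sqrt M * Real.sqrt M) * Real.sqrt M
        ≤ (Real.sqrt M * Real.sqrt M - 1)^2 := by
      nlinarith [mul_le_mul_of_nonneg_left hsM
          (mul_nonneg (mul_nonneg hsM0 hsM0) hsM0),
        mul_le_mul_of_nonneg_left hsM (mul_nonneg hsM0 hsM0)]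
    have h3 : (Real.sqrt M * Real.sqrt M - 1)^2 = (M-1)^2 := by rw [hsMsq]
    calc Real.sqrt S ≤ Real.sqrt ((M-1)^2) := Real.sqrt_le_sqrt (by linarith)
    _ = M - 1 := Real.sqrt_sq (by linarith)
  -- facts about k
  have hk_lb : (1000:ℝ) ≤ (k:ℝ) := by
    have h : (1000:ℕ) ≤ k := by
      rw [hkd]; exact Nat.le_floor (by exact_mod_cast hsS_lb)
    exact_mod_cast h
  have hk_ub : (k:ℝ) ≤ M - 1 := by
    refine le_trans ?_ hsS_ub
    rw [hkd]; exact Nat.floor_le (Real.sqrt_nonneg _)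
  have hsk : (30:ℝ) ≤ Real.sqrt k := by
    rw [show (30:ℝ) = Real.sqrt (30^2) by
      rw [Real.sqrt_sq (by norm_num : (0:ℝ) ≤ 30)]]
    exact Real.sqrt_le_sqrt (by nlinarith)
  have hsksq : Real.sqrt k * Real.sqrt k = (k:ℝ) := Real.mul_self_sqrt (by linarith)
  have hlogk : Real.logb 2 k ≤ (k:ℝ)/10 := by
    have h1 : Real.logb 2 k ≤ 3 * Real.sqrt k := aux_logb_le (by linarith)
    nlinarith [Real.sqrt_nonneg (k:ℝ)]
  have hlog2k_ub : Real.logb 2 (2*(k:ℝ)) ≤ (k:ℝ)/2 := by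
    rw [Real.logb_mul (by norm_num) (by positivity), Real.logb_self_eq_one one_lt_two]
    linarith
  have hlog2k_lb : (1:ℝ) ≤ Real.logb 2 (2*(k:ℝ)) := by
    rw [Real.logb_mul (by norm_num) (by positivity), Real.logb_self_eq_one one_lt_two]
    have : (0:ℝ) ≤ Real.logb 2 k := Real.logb_nonneg one_lt_two (by linarith)
    linarith
  set d := (k:ℝ) - Real.logb 2 (2*(k:ℝ)) with hddef
  clear_value d
  have hd_lb : (k:ℝ)/2 ≤ d := by rw [hddef]; linarith
  have hd_ub : d ≤ (k:ℝ) := by rw [hddef]; linarith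
  have hdpos : (0:ℝ) < d := by linarith
  set Lg := Real.logb 2 ((N:ℝ)/2) with hLgdef
  clear_value Lg
  have hLg : Lg = M - 1 := by
    rw [hLgdef, Real.logb_div (by positivity) (by norm_num), hMdef,
      Real.logb_self_eq_one one_lt_two]
  have hLgpos : (0:ℝ) < Lg := by rw [hLg]; linarith
  have hLgk : (k:ℝ) ≤ Lg := by rw [hLg]; exact hk_ub
  -- facts about m
  have hmposn : 0 < m := by
    rw [hmd]; exact Nat.ceil_pos.mpr (div_pos hLgpos hdpos)
  have hmpos : (0:ℝ) < m := by exact_mod_cast hmposn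
  have hm_lb : Lg ≤ d * (m:ℝ) := by
    have h : Lg/d ≤ (m:ℝ) := by rw [hmd]; exact Nat.le_ceil _
    rw [mul_comm]
    exact (div_le_iff₀ hdpos).mp h
  have hm_ub' : d * (m:ℝ) < Lg + d := by
    have h : (m:ℝ) < Lg/d + 1 := by
      rw [hmd]; exact Nat.ceil_lt_add_one (le_of_lt (div_pos hLgpos hdpos))
    have h2 : (m:ℝ) - 1 < Lg/d := by linarith
    have h3 : ((m:ℝ) - 1) * d < Lg := (lt_div_iff₀ hdpos).mp h2
    nlinarith [h3]
  have hLm_ub : Lg/(m:ℝ) ≤ d := by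
    rw [div_le_iff₀ hmpos]; linarith
  set c := Real.logb 2 (4*(k:ℝ)+1) with hcdef
  clear_value c
  have hc_lb : (1:ℝ) ≤ c := by
    have h2 : Real.logb 2 2 ≤ Real.logb 2 (4*(k:ℝ)+1) :=
      (Real.logb_le_logb one_lt_two (by norm_num) (by linarith)).mpr (by linarith)
    rw [Real.logb_self_eq_one one_lt_two] at h2
    rw [hcdef]
    exact h2
  have hc_ub : c ≤ (k:ℝ)/4 := by
    have h1 : Real.logb 2 (4*(k:ℝ)+1) ≤ Real.logb 2 (8*(k:ℝ)) :=
      (Real.logb_le_logb one_lt_two (by linarith) (by linarith)).mpr (by linarith)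
    have h2 : Real.logb 2 (8*(k:ℝ)) = 3 + Real.logb 2 k := by
      rw [show (8:ℝ)*(k:ℝ) = 2^(3:ℕ) * k by norm_num,
        Real.logb_mul (by norm_num) (by positivity), aux_logb_pow]
      norm_num
    rw [hcdef]
    linarith
  have hLm_lb : c ≤ Lg/(m:ℝ) := by
    rw [le_div_iff₀ hmpos]
    have hcpos : (0:ℝ) < c := by linarith
    have hA : c * (d * (m:ℝ)) < c * (Lg + d) := mul_lt_mul_of_pos_left hm_ub' hcpos
    have hB : c * Lg ≤ (k:ℝ)/4 * Lg := mul_le_mul_of_nonneg_right hc_ub (le_of_lt hLgpos)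
    have hC : c * d ≤ (k:ℝ)/4 * (k:ℝ) :=
      mul_le_mul hc_ub hd_ub (le_of_lt hdpos) (by linarith)
    have hC' : (k:ℝ)/4 * (k:ℝ) ≤ (k:ℝ)/4 * Lg :=
      mul_le_mul_of_nonneg_left hLgk (by linarith)
    have hD : (k:ℝ)/2 * Lg ≤ d * Lg := mul_le_mul_of_nonneg_right hd_lb (le_of_lt hLgpos)
    have hE : d * (c * (m:ℝ)) < d * Lg := by nlinarith
    have := (mul_lt_mul_iff_right₀ hdpos).mp hE
    linarith
  -- facts about ρ
  have hx2 : (N:ℝ)/2 = (2:ℝ)^Lg := by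
    rw [hLgdef, Real.rpow_logb (by norm_num) (by norm_num) (by positivity)]
  have hρ2 : ρ = (2:ℝ)^(Lg/(m:ℝ)) := by
    rw [hρd, hx2, ← Real.rpow_mul (by norm_num), mul_one_div]
  have hρ_lb : 4*(k:ℝ)+1 ≤ ρ := by
    have h : (2:ℝ)^c ≤ (2:ℝ)^(Lg/(m:ℝ)) :=
      (Real.rpow_le_rpow_left_iff one_lt_two).mpr hLm_lb
    rw [hcdef, Real.rpow_logb (by norm_num) (by norm_num) (by linarith)] at h
    rw [hρ2]; linarith
  have hρ_ub : ρ * (2*(k:ℝ)) ≤ (2:ℝ)^k := by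
    have h1 : ρ ≤ (2:ℝ)^d := by
      rw [hρ2]; exact (Real.rpow_le_rpow_left_iff one_lt_two).mpr hLm_ub
    have h2 : (2:ℝ)^d = (2:ℝ)^((k:ℕ):ℝ) / (2*(k:ℝ)) := by
      rw [hddef, Real.rpow_sub (by norm_num),
        Real.rpow_logb (by norm_num) (by norm_num) (by positivity)]
    rw [Real.rpow_natCast] at h2
    rw [← le_div_iff₀ (by positivity : (0:ℝ) < 2*(k:ℝ))]
    linarith
  have hρ1 : (1:ℝ) < ρ := by linarith
  have hρ0 : (0:ℝ) < ρ := by linarith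
  have hρm : ρ^m = (N:ℝ)/2 := by
    rw [hρd, ← Real.rpow_natCast (((N:ℝ)/2) ^ ((1:ℝ)/(m:ℝ))) m, ← Real.rpow_mul (by positivity)]
    rw [show (1:ℝ)/(m:ℝ) * (m:ℝ) = 1 by field_simp, Real.rpow_one]
  refine ⟨?_, ?_, ?_⟩
  · rw [hBd, pow_zero, div_one, Nat.floor_natCast]
  · have h : (N:ℝ) / ((N:ℝ)/2) = 2 := by
      rw [div_div_eq_mul_div, mul_comm, mul_div_assoc, div_self (by linarith : (N:ℝ) ≠ 0),
        mul_one]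
    rw [hBd, hρm, h]
    norm_num
  · intro i hi
    obtain ⟨hi1, him⟩ := Finset.mem_Icc.mp hi
    have hpowle : ρ^i ≤ ρ^m := pow_le_pow_right₀ (le_of_lt hρ1) him
    have hpow_pos : (0:ℝ) < ρ^i := pow_pos hρ0 i
    have hpow_pos' : (0:ℝ) < ρ^(i-1) := pow_pos hρ0 (i-1)
    set y := (N:ℝ)/ρ^i with hydef
    clear_value y
    set z := (N:ℝ)/ρ^(i-1) with hzdef
    clear_value z
    have hypos : (0:ℝ) < y := by rw [hydef]; exact div_pos hNpos hpow_pos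
    have hzpos : (0:ℝ) < z := by rw [hzdef]; exact div_pos hNpos hpow_pos'
    have hy2 : (2:ℝ) ≤ y := by
      rw [hydef, le_div_iff₀ hpow_pos]
      calc 2 * ρ^i ≤ 2 * ρ^m := by linarith
      _ = (N:ℝ) := by rw [hρm]; ring
    have hzy : z = ρ * y := by
      have hie : ρ^i = ρ^(i-1) * ρ := by
        rw [← pow_succ]; congr 1; omega
      rw [hzdef, hydef, hie]
      rw [eq_comm, mul_div_assoc', mul_comm ρ (N:ℝ),
        mul_comm (ρ^(i-1)) ρ, ← div_div, mul_div_assoc,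
        div_self (ne_of_gt hρ0), mul_one]
    have hBi_le : ((B i : ℕ):ℝ) ≤ y := by rw [hBd, ← hydef]; exact Nat.floor_le (le_of_lt hypos)
    have hBi_ge : y - 1 < ((B i : ℕ):ℝ) := by rw [hBd, ← hydef]; exact Nat.sub_one_lt_floor _
    have hBz_le : ((B (i-1) : ℕ):ℝ) ≤ z := by rw [hBd, ← hzdef]; exact Nat.floor_le (le_of_lt hzpos)
    have hBz_ge : z - 1 < ((B (i-1) : ℕ):ℝ) := by rw [hBd, ← hzdef]; exact Nat.sub_one_lt_floor _
    have hBipos : (0:ℝ) < ((B i : ℕ):ℝ) := by linarith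
    constructor
    · rw [le_div_iff₀ hBipos]
      have h1 : 4*(k:ℝ) * ((B i : ℕ):ℝ) ≤ 4*(k:ℝ) * y :=
        mul_le_mul_of_nonneg_left hBi_le (by linarith)
      have h2 : (4*(k:ℝ)+1) * y ≤ ρ * y :=
        mul_le_mul_of_nonneg_right hρ_lb (by linarith)
      rw [hzy] at hBz_ge
      linarith
    · rw [div_le_div_iff₀ hBipos (by linarith : (0:ℝ) < (k:ℝ))]
      have h1 : ((B (i-1):ℕ):ℝ) * (k:ℝ) ≤ z * k :=
        mul_le_mul_of_nonneg_right hBz_le (by linarith)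
      have h2 : ρ * (2*(k:ℝ)) * (y/2) ≤ (2:ℝ)^k * (y/2) :=
        mul_le_mul_of_nonneg_right hρ_ub (by linarith)
      have h3 : (2:ℝ)^k * (y/2) ≤ (2:ℝ)^k * (y-1) :=
        mul_le_mul_of_nonneg_left (by linarith) (by positivity)
      have h4 : (2:ℝ)^k * (y-1) ≤ (2:ℝ)^k * ((B i : ℕ):ℝ) :=
        mul_le_mul_of_nonneg_left (by linarith) (by positivity)
      rw [hzy] at h1
      linarith
end

section
/- Let N > N₀' for a sufficiently large constant N₀', let k = ⌊√((1/2)·log₂N·log₂log₂N)⌋ and m = ⌈(log₂N)/(k - log₂(4k))⌉, and set ρ = N^{1/m} and B_i = ⌊N/ρ^i⌋ for 0 ≤ i ≤ m. Then B₀ = N, B_m = 1, and B_{i-1}/B_i ≤ 2^k/(2k) for every i ∈ {1, ..., m}. -/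
open Finset Real

lemma aux_sq_le_two_pow (n : ℕ) (hn : 4 ≤ n) : n ^ 2 ≤ 2 ^ n := by
  induction n, hn using Nat.le_induction with
  | base => norm_num
  | succ n hn ih =>
    have h2 : (n + 1) ^ 2 ≤ 2 * n ^ 2 := by nlinarith
    calc (n + 1) ^ 2 ≤ 2 * n ^ 2 := h2
      _ ≤ 2 * 2 ^ n := by omega
      _ = 2 ^ (n + 1) := by ring

/-- Lemma on the sieve sizes for `zcomb`: for all sufficiently large `N`, with
`k = ⌊√(½·log₂N·log₂log₂N)⌋`, `m = ⌈log₂N/(k - log₂(4k))⌉`, `ρ = N^{1/m}` and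
`B_i = ⌊N/ρ^i⌋`, one has `B₀ = N`, `B_m = 1`, and `B_{i-1}/B_i ≤ 2^k/(2k)`
for all `1 ≤ i ≤ m`. -/
theorem stmt_8 :
    ∃ N₀ : ℕ, ∀ N : ℕ, N₀ < N →
      let k : ℕ := ⌊Real.sqrt ((1 / 2) * Real.logb 2 N * Real.logb 2 (Real.logb 2 N))⌋₊
      let m : ℕ := ⌈Real.logb 2 (N : ℝ) / ((k : ℝ) - Real.logb 2 (4 * k))⌉₊
      let ρ : ℝ := (N : ℝ) ^ ((1 : ℝ) / m)
      let B : ℕ → ℕ := fun i => ⌊(N : ℝ) / ρ ^ i⌋₊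
      B 0 = N ∧ B m = 1 ∧
        ∀ i ∈ Finset.Icc 1 m,
          (B (i - 1) : ℝ) / (B i : ℝ) ≤ 2 ^ k / (2 * (k : ℝ)) := by
  use 2 ^ 100
  intro N hN
  intro k m ρ B
  have hN1 : (1 : ℝ) ≤ N := by
    have : (1 : ℕ) ≤ N := by omega
    exact_mod_cast this
  have hN0 : (0 : ℝ) < N := by linarith
  have hNlb : (2 : ℝ) ^ (100 : ℕ) ≤ (N : ℝ) := by exact_mod_cast hN.le
  have hlog2pow : ∀ n : ℕ, Real.logb 2 ((2 : ℝ) ^ n) = n := by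
    intro n
    rw [← Real.rpow_natCast 2 n, Real.logb_rpow (by norm_num) (by norm_num)]
  have hL : (100 : ℝ) ≤ Real.logb 2 N := by
    have h := (Real.logb_le_logb (b := 2) one_lt_two (by positivity) hN0).mpr hNlb
    rwa [hlog2pow 100] at h
  have hLL : (6 : ℝ) ≤ Real.logb 2 (Real.logb 2 N) := by
    have h64 : (2 : ℝ) ^ (6 : ℕ) ≤ Real.logb 2 N := by norm_num; linarith
    have h := (Real.logb_le_logb (b := 2) one_lt_two (by positivity) (by linarith)).mpr h64
    rwa [hlog2pow 6] at h
  have hy25 : (25 : ℝ) ≤ 1 / 2 * Real.logb 2 N * Real.logb 2 (Real.logb 2 N) := by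
    have h := mul_le_mul (by linarith : (50 : ℝ) ≤ 1 / 2 * Real.logb 2 N) hLL
      (by norm_num) (by linarith)
    linarith
  have hk5 : 5 ≤ k := by
    apply Nat.le_floor
    have h5 : ((5 : ℕ) : ℝ) = (5 : ℝ) := by norm_num
    rw [h5, Real.le_sqrt (by norm_num) (by linarith)]
    calc (5 : ℝ) ^ 2 = 25 := by norm_num
      _ ≤ _ := hy25
  have hkR : (5 : ℝ) ≤ (k : ℝ) := by exact_mod_cast hk5
  have hk0 : (0 : ℝ) < (k : ℝ) := by linarith
  -- log₂(4k) ≤ k - 1/2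
  have hsq : ((k : ℝ)) ^ 2 ≤ 2 ^ k := by
    exact_mod_cast aux_sq_le_two_pow k (by omega)
  have hlogk2 : 2 * Real.logb 2 (k : ℝ) ≤ (k : ℝ) := by
    have h := (Real.logb_le_logb (b := 2) one_lt_two (by positivity) (by positivity)).mpr hsq
    rw [Real.logb_pow, hlog2pow k] at h
    push_cast at h
    linarith
  have hlog4k : Real.logb 2 (4 * (k : ℝ)) ≤ (k : ℝ) - 1 / 2 := by
    rw [Real.logb_mul (by norm_num) (by positivity)]
    have h4 : Real.logb 2 (4 : ℝ) = 2 := by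
      have := hlog2pow 2
      norm_num at this
      exact this
    rw [h4]
    linarith
  have hd : (0 : ℝ) < (k : ℝ) - Real.logb 2 (4 * k) := by linarith
  have hm1 : 1 ≤ m := by
    exact Nat.one_le_iff_ne_zero.mpr (Nat.ceil_pos.mpr (div_pos (by linarith) hd)).ne'
  have hm0 : (0 : ℝ) < (m : ℝ) := by exact_mod_cast hm1
  have hkey : Real.logb 2 N / (m : ℝ) ≤ (k : ℝ) - Real.logb 2 (4 * k) := by
    rw [div_le_iff₀ hm0]
    have hc := Nat.le_ceil (Real.logb 2 (N : ℝ) / ((k : ℝ) - Real.logb 2 (4 * k)))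
    rw [div_le_iff₀ hd] at hc
    calc Real.logb 2 N ≤ (⌈Real.logb 2 (N : ℝ) / ((k : ℝ) - Real.logb 2 (4 * k))⌉₊ : ℝ)
          * ((k : ℝ) - Real.logb 2 (4 * k)) := hc
      _ = ((k : ℝ) - Real.logb 2 (4 * k)) * (m : ℝ) := by rw [mul_comm]
  -- ρ ≤ 2^k / (4k)
  have hρdef : ρ = (2 : ℝ) ^ (Real.logb 2 N * ((1 : ℝ) / m)) := by
    show (N : ℝ) ^ ((1 : ℝ) / m) = _
    rw [Real.rpow_mul (by norm_num), Real.rpow_logb (by norm_num) (by norm_num) hN0]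
  have hρle : ρ ≤ 2 ^ k / (4 * (k : ℝ)) := by
    rw [hρdef]
    have h1 : Real.logb 2 N * ((1 : ℝ) / m) ≤ (k : ℝ) - Real.logb 2 (4 * k) := by
      rw [mul_one_div]; exact hkey
    calc (2 : ℝ) ^ (Real.logb 2 N * ((1 : ℝ) / m))
        ≤ (2 : ℝ) ^ ((k : ℝ) - Real.logb 2 (4 * k)) :=
          (Real.rpow_le_rpow_left_iff (by norm_num)).mpr h1
      _ = 2 ^ k / (4 * (k : ℝ)) := by
          rw [Real.rpow_sub (by norm_num), Real.rpow_natCast,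
            Real.rpow_logb (by norm_num) (by norm_num) (by positivity)]
  have hρ1 : (1 : ℝ) ≤ ρ := by
    show (1 : ℝ) ≤ (N : ℝ) ^ ((1 : ℝ) / m)
    have := Real.rpow_le_rpow zero_le_one hN1 (by positivity : (0 : ℝ) ≤ (1 : ℝ) / m)
    rwa [Real.one_rpow] at this
  have hρp : (0 : ℝ) < ρ := by linarith
  have hρm : ρ ^ m = (N : ℝ) := by
    show ((N : ℝ) ^ ((1 : ℝ) / m)) ^ m = (N : ℝ)
    rw [← Real.rpow_natCast ((N : ℝ) ^ ((1 : ℝ) / m)) m, ← Real.rpow_mul hN0.le,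
      one_div, inv_mul_cancel₀ (by exact_mod_cast hm1.trans_lt' zero_lt_one |>.ne' : (m : ℝ) ≠ 0),
      Real.rpow_one]
  refine ⟨?_, ?_, ?_⟩
  · show ⌊(N : ℝ) / ρ ^ 0⌋₊ = N
    simp
  · show ⌊(N : ℝ) / ρ ^ m⌋₊ = 1
    rw [hρm, div_self hN0.ne']
    simp
  · intro i hi
    rw [Finset.mem_Icc] at hi
    obtain ⟨hi1, hi2⟩ := hi
    have hpi : (0 : ℝ) < ρ ^ i := pow_pos hρp i
    have hile : ρ ^ i ≤ N := by
      rw [← hρm]; exact pow_le_pow_right₀ hρ1 hi2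
    have hx1 : (1 : ℝ) ≤ (N : ℝ) / ρ ^ i := (one_le_div hpi).mpr hile
    have hBi : ((N : ℝ) / ρ ^ i) / 2 ≤ (B i : ℝ) := by
      have h := Nat.lt_floor_add_one ((N : ℝ) / ρ ^ i)
      have h1 : (1 : ℝ) ≤ (⌊(N : ℝ) / ρ ^ i⌋₊ : ℝ) := by
        exact_mod_cast Nat.floor_pos.mpr hx1
      show ((N : ℝ) / ρ ^ i) / 2 ≤ (⌊(N : ℝ) / ρ ^ i⌋₊ : ℝ)
      linarith
    have hBi2 : (0 : ℝ) < ((N : ℝ) / ρ ^ i) / 2 := by linarith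
    calc (B (i - 1) : ℝ) / (B i : ℝ)
        ≤ ((N : ℝ) / ρ ^ (i - 1)) / (((N : ℝ) / ρ ^ i) / 2) := by
          exact div_le_div₀ (by positivity) (Nat.floor_le (by positivity)) hBi2 hBi
      _ = 2 * ρ := by
          have hsplit : ρ ^ i = ρ ^ (i - 1) * ρ := by
            rw [← pow_succ]; congr 1; omega
          rw [hsplit]
          field_simp
      _ ≤ 2 * (2 ^ k / (4 * (k : ℝ))) := by linarith
      _ = 2 ^ k / (2 * (k : ℝ)) := by
          field_simp
          ring
end
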